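/- Let R be a commutative noetherian ring, S a ring which is an R-algebra, M an S-module and N an essential S-submodule of M. Then Ass(N) = Ass(M). -/

import Mathlib

/-- Annihilator in `R` of an `S`-submodule, `R` acting through `algebraMap R S`. -/
def annRS (R : Type*) {S M : Type*} [CommRing R] [Ring S] [Algebra R S]
    [AddCommGroup M] [Module S M] (N : Submodule S M) : Ideal R where
  carrier := {r : R | ∀ x ∈ N, algebraMap R S r • x = 0}
  zero_mem' := by intro x _; simp
  add_mem' := by
    intro a b ha hb x hx
    rw [map_add, add_smul, ha x hx, hb x hx, add_zero]
  smul_mem' := by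
    intro c a ha x hx
    rw [smul_eq_mul, map_mul, mul_smul, ha x hx, smul_zero]

/-- An `R`-elementary object: nonzero, finitely generated, and the `R`-annihilator of
every nonzero subobject equals a fixed prime ideal `p` of `R`. -/
def IsRElem (R : Type*) {S M : Type*} [CommRing R] [Ring S] [Algebra R S]
    [AddCommGroup M] [Module S M] (L : Submodule S M) : Prop :=
  L ≠ ⊥ ∧ L.FG ∧ ∃ p : Ideal R, p.IsPrime ∧
    ∀ L' : Submodule S M, L' ≤ L → L' ≠ ⊥ → annRS R L' = p

/-- Associated primes of the subobject `N`. -/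
def RAssOf (R : Type*) {S M : Type*} [CommRing R] [Ring S] [Algebra R S]
    [AddCommGroup M] [Module S M] (N : Submodule S M) : Set (Ideal R) :=
  {p | ∃ L : Submodule S M, L ≤ N ∧ IsRElem R L ∧ annRS R L = p}


/-- If `N` is an essential `S`-submodule of `M`, then `Ass(N) = Ass(M)`. -/
theorem rAss_eq_of_essential
    (R S M : Type*) [CommRing R] [IsNoetherianRing R] [Ring S] [Algebra R S]
    [AddCommGroup M] [Module S M] (N : Submodule S M)
    (hess : ∀ N' : Submodule S M, N' ≠ ⊥ → N ⊓ N' ≠ ⊥) :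
    RAssOf R N = RAssOf R (⊤ : Submodule S M) := by
  ext p
  constructor
  · rintro ⟨L, hLN, hElem, hann⟩
    exact ⟨L, le_top, hElem, hann⟩
  · rintro ⟨L, -, ⟨hLne, -, q, hq, hann⟩, hannL⟩
    have hpq : annRS R L = q := hann L le_rfl hLne
    have hNL : N ⊓ L ≠ ⊥ := hess L hLne
    obtain ⟨x, hxNL, hx0⟩ := Submodule.exists_mem_ne_zero_of_ne_bot hNL
    set L'' : Submodule S M := Submodule.span S {x} with hL''
    have hL''L : L'' ≤ L := Submodule.span_le.2 (by
      simpa using (Submodule.mem_inf.1 hxNL).2)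
    have hL''N : L'' ≤ N := Submodule.span_le.2 (by
      simpa using (Submodule.mem_inf.1 hxNL).1)
    have hL''ne : L'' ≠ ⊥ := by
      intro h
      apply hx0
      have : x ∈ L'' := Submodule.mem_span_singleton_self x
      rw [h] at this
      simpa using this
    refine ⟨L'', hL''N, ⟨hL''ne, ⟨{x}, by simp [hL'']⟩, q, hq,
      fun L' hL' hL'ne => hann L' (hL'.trans hL''L) hL'ne⟩, ?_⟩
    rw [hann L'' hL''L hL''ne, ← hpq, hannL]
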